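/- Let T be the bilateral forward weighted shift on ℓ²(ℤ) with weights w_n = 1/2 for n ≥ 0 and w_n = 3 for n < 0, and let M = {a ∈ ℓ²(ℤ) : a_{2n} = 0 for all n ∈ ℤ} be the closed subspace of sequences vanishing at even indices. Then T^{2k}(M) ⊆ M for all k ∈ ℕ, ∏_{j=1}^{2k} w_j → 0, and ∏_{j=-1}^{-2k} (1/w_j) → 0 as k → ∞; consequently T is M-hypercyclic. -/

import Mathlib

open Filter
open scoped Topology

noncomputable section SalasAux

private abbrev E2 := lp (fun _ : ℤ => ℂ) 2

private def coordCLM (m : ℤ) : E2 →L[ℂ] ℂ :=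
  LinearMap.mkContinuous
    { toFun := fun x => x m
      map_add' := fun x y => by simp [lp.coeFn_add]
      map_smul' := fun c x => by simp [lp.coeFn_smul] }
    1 (fun x => by rw [one_mul]; exact lp.norm_apply_le_norm (by norm_num) x m)

@[simp] private lemma coordCLM_apply (m : ℤ) (x : E2) : coordCLM m x = x m := rfl

private lemma single_eq_smul (i : ℤ) (a : ℂ) :
    lp.single 2 i a = a • (lp.single (E := fun _ : ℤ => ℂ) 2 i (1 : ℂ)) := by
  have := (lp.single_smul (E := fun _ : ℤ => ℂ) 2 i a (1 : ℂ))
  rw [← this, smul_eq_mul, mul_one]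

private lemma wpos {w : ℤ → ℝ} (hw : ∀ n : ℤ, w n = if 0 ≤ n then (1 / 2 : ℝ) else 3)
    (n : ℤ) : 0 < w n := by rw [hw]; split <;> norm_num

variable {w : ℤ → ℝ} {T : E2 →L[ℂ] E2}

private lemma hT' (hT : ∀ n : ℤ, T (lp.single 2 n (1 : ℂ)) = (w n : ℂ) • lp.single 2 (n + 1) (1 : ℂ))
    (i : ℤ) (a : ℂ) :
    T (lp.single 2 i a) = (w i : ℂ) • lp.single 2 (i + 1) a := by
  rw [single_eq_smul i a, map_smul, hT, single_eq_smul (i+1) a, smul_comm]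

private lemma Tpow_single
    (hT : ∀ n : ℤ, T (lp.single 2 n (1 : ℂ)) = (w n : ℂ) • lp.single 2 (n + 1) (1 : ℂ))
    (n : ℕ) (i : ℤ) (a : ℂ) :
    (T ^ n) (lp.single 2 i a) =
      (∏ j ∈ Finset.range n, (w (i + j) : ℂ)) • lp.single 2 (i + n) a := by
  induction n generalizing i a with
  | zero => simp
  | succ n ih =>
    have h0 : (T ^ (n + 1)) (lp.single 2 i a) = (T ^ n) (T (lp.single 2 i a)) := by
      rw [pow_succ]; rfl
    rw [h0, hT' hT, map_smul, ih]
    rw [Finset.prod_range_succ']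
    have harg : i + 1 + (n : ℤ) = i + ((n : ℕ) + 1 : ℕ) := by push_cast; ring
    rw [harg, smul_smul, mul_comm]
    congr 2
    · refine Finset.prod_congr rfl fun j _ => ?_
      congr 2; push_cast; ring
    · norm_num

private lemma Tcoord
    (hT : ∀ n : ℤ, T (lp.single 2 n (1 : ℂ)) = (w n : ℂ) • lp.single 2 (n + 1) (1 : ℂ))
    (x : E2) (m : ℤ) : (T x) m = (w (m - 1) : ℂ) * x (m - 1) := by
  have hs : HasSum (fun i : ℤ => lp.single 2 i (x i)) x :=
    lp.hasSum_single (by norm_num) x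
  have h1 : HasSum (fun i : ℤ => coordCLM m (T (lp.single 2 i (x i)))) (coordCLM m (T x)) :=
    ((coordCLM m).comp T).hasSum hs
  have h2 : HasSum (fun i : ℤ => if i = m - 1 then (w (m - 1) : ℂ) * x (m - 1) else 0)
      ((w (m - 1) : ℂ) * x (m - 1)) := hasSum_ite_eq _ _
  have he : (fun i : ℤ => coordCLM m (T (lp.single 2 i (x i)))) =
      fun i : ℤ => if i = m - 1 then (w (m - 1) : ℂ) * x (m - 1) else 0 := by
    funext i
    rw [hT' hT]
    simp only [coordCLM_apply, lp.coeFn_smul, Pi.smul_apply, smul_eq_mul]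
    by_cases h : i = m - 1
    · subst h
      have : m - 1 + 1 = m := by ring
      rw [if_pos rfl, this, lp.single_apply_self]
    · rw [if_neg h, lp.single_apply_ne _ _ _ (by omega)]
      ring
  rw [he] at h1
  simpa using h1.unique h2


private def Fv (s : Finset ℤ) (a : ℤ → ℂ) : E2 := ∑ i ∈ s, lp.single 2 i (a i)

private def Pv (w : ℤ → ℝ) (n : ℕ) (s : Finset ℤ) (a : ℤ → ℂ) : E2 :=
  ∑ i ∈ s, (((∏ j ∈ Finset.range n, w (i - 1 - (j : ℤ))) : ℝ) : ℂ)⁻¹ •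
    lp.single 2 (i - (n : ℤ)) (a i)

private lemma Pv_zero (s : Finset ℤ) (a : ℤ → ℂ) : Pv w 0 s a = Fv s a := by
  unfold Pv Fv
  refine Finset.sum_congr rfl fun i _ => ?_
  simp

private lemma prodsplit (i : ℤ) (b m : ℕ) :
    (∏ j ∈ Finset.range (b + m), w (i - 1 - (j : ℤ))) =
      (∏ j ∈ Finset.range b, w (i - 1 - (j : ℤ))) *
        ∏ j ∈ Finset.range m, w (i - ((b + m : ℕ) : ℤ) + (j : ℤ)) := by
  rw [Finset.prod_range_add]
  congr 1
  rw [← Finset.prod_range_reflect]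
  refine Finset.prod_congr rfl fun j hj => ?_
  have hj' : j < m := Finset.mem_range.mp hj
  congr 1
  have : ((m - 1 - j : ℕ) : ℤ) = (m : ℤ) - 1 - j := by omega
  push_cast [this]
  ring

private lemma prodpos (hw : ∀ n : ℤ, w n = if 0 ≤ n then (1 / 2 : ℝ) else 3)
    (f : ℕ → ℤ) (n : ℕ) : 0 < ∏ j ∈ Finset.range n, w (f j) :=
  Finset.prod_pos fun j _ => wpos hw (f j)

private lemma TPv (hw : ∀ n : ℤ, w n = if 0 ≤ n then (1 / 2 : ℝ) else 3)
    (hT : ∀ n : ℤ, T (lp.single 2 n (1 : ℂ)) = (w n : ℂ) • lp.single 2 (n + 1) (1 : ℂ))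
    (m b : ℕ) (s : Finset ℤ) (a : ℤ → ℂ) :
    (T ^ m) (Pv w (b + m) s a) = Pv w b s a := by
  unfold Pv
  rw [map_sum]
  refine Finset.sum_congr rfl fun i _ => ?_
  rw [map_smul, Tpow_single hT]
  rw [smul_smul]
  have harg : i - ((b + m : ℕ) : ℤ) + (m : ℕ) = i - (b : ℕ) := by push_cast; ring
  rw [harg]
  congr 1
  have hC : (∏ j ∈ Finset.range m, (w (i - ((b + m : ℕ) : ℤ) + (j : ℤ)) : ℂ)) =
      ((∏ j ∈ Finset.range m, w (i - ((b + m : ℕ) : ℤ) + (j : ℤ)) : ℝ) : ℂ) := by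
    push_cast; rfl
  rw [hC, prodsplit]
  have h1 : (∏ j ∈ Finset.range b, w (i - 1 - (j : ℤ))) ≠ 0 :=
    (prodpos hw _ b).ne'
  have h2 : (∏ j ∈ Finset.range m, w (i - ((b + m : ℕ) : ℤ) + (j : ℤ))) ≠ 0 :=
    (prodpos hw _ m).ne'
  have h1' : ((∏ j ∈ Finset.range b, w (i - 1 - (j : ℤ)) : ℝ) : ℂ) ≠ 0 := by
    exact_mod_cast h1
  have h2' : ((∏ j ∈ Finset.range m, w (i - ((b + m : ℕ) : ℤ) + (j : ℤ)) : ℝ) : ℂ) ≠ 0 := by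
    exact_mod_cast h2
  push_cast at h1' h2' ⊢
  field_simp

private lemma gbound (hw : ∀ n : ℤ, w n = if 0 ≤ n then (1 / 2 : ℝ) else 3)
    (i : ℤ) (n : ℕ) :
    (∏ j ∈ Finset.range n, w (i - 1 - (j : ℤ)))⁻¹ ≤ 6 ^ i.toNat * (1 / 3 : ℝ) ^ n := by
  have key : ∀ n : ℕ, (∏ j ∈ Finset.range n, w (i - 1 - (j : ℤ)))⁻¹ ≤
      6 ^ (min n i.toNat) * (1 / 3 : ℝ) ^ n := by
    intro n
    induction n with
    | zero => simp
    | succ n ih =>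
      rw [Finset.prod_range_succ, mul_inv]
      by_cases hc : 0 ≤ i - 1 - (n : ℤ)
      · have hwv : w (i - 1 - (n : ℤ)) = 1 / 2 := by rw [hw, if_pos hc]
        have hmin : min n i.toNat = n := by omega
        have hmin' : min (n + 1) i.toNat = n + 1 := by omega
        rw [hwv, hmin'] at *
        rw [hmin] at ih
        have : (6 : ℝ) ^ (n + 1) * (1 / 3) ^ (n + 1) = (6 ^ n * (1 / 3) ^ n) * 2 := by
          ring
        rw [this]
        have h2 : ((1 : ℝ) / 2)⁻¹ = 2 := by norm_num
        rw [h2]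
        have hpos : (0 : ℝ) < ∏ j ∈ Finset.range n, w (i - 1 - (j : ℤ)) :=
          prodpos hw _ n
        nlinarith [inv_nonneg.mpr hpos.le]
      · have hwv : w (i - 1 - (n : ℤ)) = 3 := by rw [hw, if_neg hc]
        rw [hwv]
        have h3 : (3 : ℝ)⁻¹ = 1 / 3 := by norm_num
        rw [h3]
        have hle : (6 : ℝ) ^ (min n i.toNat) ≤ 6 ^ (min (n + 1) i.toNat) := by
          apply pow_le_pow_right₀ (by norm_num)
          omega
        calc (∏ j ∈ Finset.range n, w (i - 1 - (j : ℤ)))⁻¹ * (1 / 3)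
            ≤ (6 ^ (min n i.toNat) * (1 / 3 : ℝ) ^ n) * (1 / 3) := by
              apply mul_le_mul_of_nonneg_right ih; norm_num
          _ ≤ 6 ^ (min (n + 1) i.toNat) * (1 / 3 : ℝ) ^ (n + 1) := by
              rw [pow_succ]
              nlinarith [pow_nonneg (by norm_num : (0:ℝ) ≤ 1/3) n]
  calc (∏ j ∈ Finset.range n, w (i - 1 - (j : ℤ)))⁻¹
      ≤ 6 ^ (min n i.toNat) * (1 / 3 : ℝ) ^ n := key n
    _ ≤ 6 ^ i.toNat * (1 / 3 : ℝ) ^ n := by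
        apply mul_le_mul_of_nonneg_right _ (by positivity)
        apply pow_le_pow_right₀ (by norm_num)
        omega

private lemma fbound (hw : ∀ n : ℤ, w n = if 0 ≤ n then (1 / 2 : ℝ) else 3)
    (i : ℤ) (n : ℕ) :
    (∏ j ∈ Finset.range n, w (i + (j : ℤ))) ≤ 6 ^ (-i).toNat * (1 / 2 : ℝ) ^ n := by
  have key : ∀ n : ℕ, (∏ j ∈ Finset.range n, w (i + (j : ℤ))) ≤
      6 ^ (min n (-i).toNat) * (1 / 2 : ℝ) ^ n := by
    intro n
    induction n with
    | zero => simp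
    | succ n ih =>
      rw [Finset.prod_range_succ]
      by_cases hc : 0 ≤ i + (n : ℤ)
      · have hwv : w (i + (n : ℤ)) = 1 / 2 := by rw [hw, if_pos hc]
        rw [hwv]
        have hle : (6 : ℝ) ^ (min n (-i).toNat) ≤ 6 ^ (min (n + 1) (-i).toNat) := by
          apply pow_le_pow_right₀ (by norm_num)
          omega
        calc (∏ j ∈ Finset.range n, w (i + (j : ℤ))) * (1 / 2)
            ≤ (6 ^ (min n (-i).toNat) * (1 / 2 : ℝ) ^ n) * (1 / 2) := by
              apply mul_le_mul_of_nonneg_right ih; norm_num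
          _ ≤ 6 ^ (min (n + 1) (-i).toNat) * (1 / 2 : ℝ) ^ (n + 1) := by
              rw [pow_succ]
              nlinarith [pow_nonneg (by norm_num : (0:ℝ) ≤ 1/2) n]
      · have hwv : w (i + (n : ℤ)) = 3 := by rw [hw, if_neg hc]
        have hmin : min n (-i).toNat = n := by omega
        have hmin' : min (n + 1) (-i).toNat = n + 1 := by omega
        rw [hwv, hmin']
        rw [hmin] at ih
        have : (6 : ℝ) ^ (n + 1) * (1 / 2) ^ (n + 1) = (6 ^ n * (1 / 2) ^ n) * 3 := by
          ring
        rw [this]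
        have hpos : (0 : ℝ) < ∏ j ∈ Finset.range n, w (i + (j : ℤ)) := prodpos hw _ n
        nlinarith
  calc (∏ j ∈ Finset.range n, w (i + (j : ℤ)))
      ≤ 6 ^ (min n (-i).toNat) * (1 / 2 : ℝ) ^ n := key n
    _ ≤ 6 ^ (-i).toNat * (1 / 2 : ℝ) ^ n := by
        apply mul_le_mul_of_nonneg_right _ (by positivity)
        apply pow_le_pow_right₀ (by norm_num)
        omega

private lemma norm_single' (i : ℤ) (a : ℂ) :
    ‖(lp.single (E := fun _ : ℤ => ℂ) 2 i a)‖ = ‖a‖ :=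
  lp.norm_single (E := fun _ : ℤ => ℂ) (by norm_num) i a

private lemma normPv (hw : ∀ n : ℤ, w n = if 0 ≤ n then (1 / 2 : ℝ) else 3)
    (n : ℕ) (s : Finset ℤ) (a : ℤ → ℂ) :
    ‖Pv w n s a‖ ≤ (∑ i ∈ s, 6 ^ i.toNat * ‖a i‖) * (1 / 3 : ℝ) ^ n := by
  unfold Pv
  refine (norm_sum_le _ _).trans ?_
  rw [Finset.sum_mul]
  refine Finset.sum_le_sum fun i hi => ?_
  rw [norm_smul, norm_single', norm_inv, Complex.norm_real, Real.norm_eq_abs,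
    abs_of_pos (prodpos hw _ n)]
  calc (∏ j ∈ Finset.range n, w (i - 1 - (j : ℤ)))⁻¹ * ‖a i‖
      ≤ (6 ^ i.toNat * (1 / 3 : ℝ) ^ n) * ‖a i‖ :=
        mul_le_mul_of_nonneg_right (gbound hw i n) (norm_nonneg _)
    _ = 6 ^ i.toNat * ‖a i‖ * (1 / 3 : ℝ) ^ n := by ring

private lemma normTF (hw : ∀ n : ℤ, w n = if 0 ≤ n then (1 / 2 : ℝ) else 3)
    (hT : ∀ n : ℤ, T (lp.single 2 n (1 : ℂ)) = (w n : ℂ) • lp.single 2 (n + 1) (1 : ℂ))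
    (m : ℕ) (s : Finset ℤ) (a : ℤ → ℂ) :
    ‖(T ^ m) (Fv s a)‖ ≤ (∑ i ∈ s, 6 ^ (-i).toNat * ‖a i‖) * (1 / 2 : ℝ) ^ m := by
  unfold Fv
  rw [map_sum]
  refine (norm_sum_le _ _).trans ?_
  rw [Finset.sum_mul]
  refine Finset.sum_le_sum fun i hi => ?_
  rw [Tpow_single hT, norm_smul, norm_single']
  have hc : (∏ j ∈ Finset.range m, (w (i + (j : ℤ)) : ℂ)) =
      ((∏ j ∈ Finset.range m, w (i + (j : ℤ)) : ℝ) : ℂ) := by push_cast; rfl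
  rw [hc, Complex.norm_real, Real.norm_eq_abs, abs_of_pos (prodpos hw _ m)]
  calc (∏ j ∈ Finset.range m, w (i + (j : ℤ))) * ‖a i‖
      ≤ (6 ^ (-i).toNat * (1 / 2 : ℝ) ^ m) * ‖a i‖ :=
        mul_le_mul_of_nonneg_right (fbound hw i m) (norm_nonneg _)
    _ = 6 ^ (-i).toNat * ‖a i‖ * (1 / 2 : ℝ) ^ m := by ring

private lemma tendPv (hw : ∀ n : ℤ, w n = if 0 ≤ n then (1 / 2 : ℝ) else 3)
    (s : Finset ℤ) (a : ℤ → ℂ) :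
    Tendsto (fun n : ℕ => ‖Pv w n s a‖) atTop (𝓝 0) := by
  refine squeeze_zero (fun n => norm_nonneg _) (fun n => normPv hw n s a) ?_
  simpa using (tendsto_pow_atTop_nhds_zero_of_lt_one (by norm_num : (0:ℝ) ≤ 1/3)
    (by norm_num)).const_mul (∑ i ∈ s, 6 ^ i.toNat * ‖a i‖)

private lemma tendTF (hw : ∀ n : ℤ, w n = if 0 ≤ n then (1 / 2 : ℝ) else 3)
    (hT : ∀ n : ℤ, T (lp.single 2 n (1 : ℂ)) = (w n : ℂ) • lp.single 2 (n + 1) (1 : ℂ))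
    (s : Finset ℤ) (a : ℤ → ℂ) :
    Tendsto (fun m : ℕ => ‖(T ^ m) (Fv s a)‖) atTop (𝓝 0) := by
  refine squeeze_zero (fun n => norm_nonneg _) (fun m => normTF hw hT m s a) ?_
  simpa using (tendsto_pow_atTop_nhds_zero_of_lt_one (by norm_num : (0:ℝ) ≤ 1/2)
    (by norm_num)).const_mul (∑ i ∈ s, 6 ^ (-i).toNat * ‖a i‖)

private lemma single_zero' (i : ℤ) : (lp.single (E := fun _ : ℤ => ℂ) 2 i (0 : ℂ)) = 0 := by
  have := lp.single_smul (E := fun _ : ℤ => ℂ) 2 i (1 : ℂ) (0 : ℂ)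
  simpa using this

private lemma PvmemM {M : Submodule ℂ E2}
    (hM : ∀ x : E2, x ∈ M ↔ ∀ n : ℤ, x (2 * n) = 0)
    {n : ℕ} (hn : Even n) {s : Finset ℤ} (hs : ∀ i ∈ s, Odd i) (a : ℤ → ℂ) :
    Pv w n s a ∈ M := by
  unfold Pv
  refine Submodule.sum_mem M fun i hi => Submodule.smul_mem M _ ?_
  rw [hM]
  intro t
  apply lp.single_apply_ne
  obtain ⟨c, hc⟩ := hs i hi
  obtain ⟨dd, hd⟩ := hn
  omega

private lemma FvmemM {M : Submodule ℂ E2}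
    (hM : ∀ x : E2, x ∈ M ↔ ∀ n : ℤ, x (2 * n) = 0)
    {s : Finset ℤ} (hs : ∀ i ∈ s, Odd i) (a : ℤ → ℂ) (w' : ℤ → ℝ) :
    Fv s a ∈ M := by
  rw [← Pv_zero (w := w')]
  exact PvmemM hM ⟨0, rfl⟩ hs a

private lemma Mclosed {M : Submodule ℂ E2}
    (hM : ∀ x : E2, x ∈ M ↔ ∀ n : ℤ, x (2 * n) = 0) : IsClosed (M : Set E2) := by
  have hset : (M : Set E2) = ⋂ t : ℤ, (coordCLM (2 * t)) ⁻¹' {0} := by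
    ext x
    simp [hM x, Set.mem_iInter]
  rw [hset]
  exact isClosed_iInter fun t => isClosed_singleton.preimage (coordCLM (2 * t)).continuous

private lemma TTmemM (hw : ∀ n : ℤ, w n = if 0 ≤ n then (1 / 2 : ℝ) else 3)
    (hT : ∀ n : ℤ, T (lp.single 2 n (1 : ℂ)) = (w n : ℂ) • lp.single 2 (n + 1) (1 : ℂ))
    {M : Submodule ℂ E2} (hM : ∀ x : E2, x ∈ M ↔ ∀ n : ℤ, x (2 * n) = 0)
    {x : E2} (hx : x ∈ M) : T (T x) ∈ M := by
  rw [hM] at hx ⊢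
  intro t
  rw [Tcoord hT, Tcoord hT]
  have h1 : (2 * t - 1 - 1 : ℤ) = 2 * (t - 1) := by ring
  rw [h1, hx (t - 1)]
  ring

private lemma TpowmemM (hw : ∀ n : ℤ, w n = if 0 ≤ n then (1 / 2 : ℝ) else 3)
    (hT : ∀ n : ℤ, T (lp.single 2 n (1 : ℂ)) = (w n : ℂ) • lp.single 2 (n + 1) (1 : ℂ))
    {M : Submodule ℂ E2} (hM : ∀ x : E2, x ∈ M ↔ ∀ n : ℤ, x (2 * n) = 0)
    (k : ℕ) : ∀ x ∈ M, (T ^ (2 * k)) x ∈ M := by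
  induction k with
  | zero => intro x hx; simpa using hx
  | succ k ih =>
    intro x hx
    have h2 : 2 * (k + 1) = 2 + 2 * k := by ring
    rw [h2, pow_add, ContinuousLinearMap.mul_apply]
    have hmem := ih x hx
    have h3 : (T ^ 2) ((T ^ (2 * k)) x) = T (T ((T ^ (2 * k)) x)) := by
      rw [pow_two, ContinuousLinearMap.mul_apply]
    rw [h3]
    exact TTmemM hw hT hM hmem

private def cQ (p : ℚ × ℚ) : ℂ := (p.1 : ℂ) + (p.2 : ℂ) * Complex.I

private lemma cQ_zero : cQ 0 = 0 := by simp [cQ]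

private lemma ratApprox (z : ℂ) {ε : ℝ} (hε : 0 < ε) :
    ∃ p : ℚ × ℚ, ‖cQ p - z‖ < ε := by
  obtain ⟨q1, h1⟩ := exists_rat_near z.re (show (0:ℝ) < ε / 2 by positivity)
  obtain ⟨q2, h2⟩ := exists_rat_near z.im (show (0:ℝ) < ε / 2 by positivity)
  refine ⟨(q1, q2), ?_⟩
  have hre : (cQ (q1, q2) - z).re = (q1 : ℝ) - z.re := by simp [cQ]
  have him : (cQ (q1, q2) - z).im = (q2 : ℝ) - z.im := by simp [cQ]
  calc ‖cQ (q1, q2) - z‖ ≤ |(cQ (q1, q2) - z).re| + |(cQ (q1, q2) - z).im| :=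
        Complex.norm_le_abs_re_add_abs_im _
    _ < ε := by
        rw [hre, him]
        rw [abs_sub_comm] at h1 h2
        calc |(q1:ℝ) - z.re| + |(q2:ℝ) - z.im| < ε / 2 + ε / 2 := by
              apply add_lt_add h1 h2
          _ = ε := by ring

/-- the countable family of approximants -/
private def sOf (q : ℤ →₀ ℚ × ℚ) : Finset ℤ := q.support.filter (fun i => Odd i)

private def aOf (q : ℤ →₀ ℚ × ℚ) : ℤ → ℂ := fun i => cQ (q i)

private lemma sOf_odd (q : ℤ →₀ ℚ × ℚ) : ∀ i ∈ sOf q, Odd i := by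
  intro i hi
  exact (Finset.mem_filter.mp hi).2

private lemma denseQ {M : Submodule ℂ E2}
    (hM : ∀ x : E2, x ∈ M ↔ ∀ n : ℤ, x (2 * n) = 0)
    (y : E2) (hy : y ∈ M) {ε : ℝ} (hε : 0 < ε) :
    ∃ q : ℤ →₀ ℚ × ℚ, ‖Fv (sOf q) (aOf q) - y‖ < ε := by
  classical
  -- partial sum approximation
  have hs : HasSum (fun i : ℤ => lp.single 2 i (y i)) y :=
    lp.hasSum_single (by norm_num) y
  have hev := Metric.tendsto_nhds.mp hs (ε / 2) (by positivity)
  obtain ⟨s₀, hs₀⟩ := Filter.eventually_atTop.mp hev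
  have hpart : dist (∑ i ∈ s₀, lp.single 2 i (y i)) y < ε / 2 := hs₀ s₀ le_rfl
  set sf : Finset ℤ := s₀.filter (fun i => Odd i) with hsf
  -- the even-index terms vanish
  have hfilter : (∑ i ∈ sf, lp.single 2 i (y i)) = ∑ i ∈ s₀, lp.single 2 i (y i) := by
    apply Finset.sum_filter_of_ne
    intro i hi hne
    by_contra hodd
    have heven : Even i := Int.not_odd_iff_even.mp hodd
    obtain ⟨t, ht⟩ := heven
    have hyi : y i = 0 := by
      have := (hM y).mp hy t
      rwa [show (2 * t : ℤ) = i by omega] at this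
    rw [hyi, single_zero'] at hne
    exact hne rfl
  -- rational approximation of coefficients
  set δ : ℝ := ε / (2 * ((s₀.card : ℝ) + 1)) with hδdef
  have hcard : (0 : ℝ) ≤ (s₀.card : ℝ) := Nat.cast_nonneg _
  have hδ : 0 < δ := by positivity
  have hchoice : ∀ i : ℤ, ∃ p : ℚ × ℚ, ‖cQ p - y i‖ < δ := fun i => ratApprox (y i) hδ
  choose r hr using hchoice
  set q : ℤ →₀ ℚ × ℚ := Finsupp.onFinset sf (fun i => if i ∈ sf then r i else 0)
    (fun i h => by by_contra hmem; simp [hmem] at h) with hq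
  refine ⟨q, ?_⟩
  have hqsupp : sOf q ⊆ sf := by
    intro i hi
    have : i ∈ q.support := (Finset.mem_filter.mp hi).1
    have := Finsupp.support_onFinset_subset this
    exact this
  -- Fv over sOf q equals Fv over sf
  have hFv : Fv (sOf q) (aOf q) = ∑ i ∈ sf, lp.single 2 i (cQ (q i)) := by
    unfold Fv
    apply Finset.sum_subset hqsupp
    intro i hi hni
    have hodd : Odd i := (Finset.mem_filter.mp hi).2
    have hns : i ∉ q.support := by
      intro hmem
      exact hni (Finset.mem_filter.mpr ⟨hmem, hodd⟩)
    have : q i = 0 := Finsupp.notMem_support_iff.mp hns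
    rw [aOf, this, cQ_zero, single_zero']
  have hqval : ∀ i ∈ sf, q i = r i := by
    intro i hi
    simp [hq, Finsupp.onFinset_apply, if_pos hi]
  -- distance between Fv and the partial sum
  have hdiff : ‖Fv (sOf q) (aOf q) - ∑ i ∈ sf, lp.single 2 i (y i)‖ ≤ (s₀.card : ℝ) * δ := by
    rw [hFv, ← Finset.sum_sub_distrib]
    have hterm : ∀ i ∈ sf, (lp.single 2 i (cQ (q i)) : E2) - lp.single 2 i (y i) =
        lp.single 2 i (cQ (q i) - y i) := by
      intro i _
      rw [single_eq_smul i (cQ (q i)), single_eq_smul i (y i),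
        single_eq_smul i (cQ (q i) - y i), sub_smul]
    rw [Finset.sum_congr rfl hterm]
    calc ‖∑ i ∈ sf, (lp.single 2 i (cQ (q i) - y i) : E2)‖
        ≤ ∑ i ∈ sf, ‖(lp.single 2 i (cQ (q i) - y i) : E2)‖ := norm_sum_le _ _
      _ ≤ ∑ _i ∈ sf, δ := by
          refine Finset.sum_le_sum fun i hi => ?_
          rw [norm_single', hqval i hi]
          exact (hr i).le
      _ = (sf.card : ℝ) * δ := by rw [Finset.sum_const, nsmul_eq_mul]
      _ ≤ (s₀.card : ℝ) * δ := by
          apply mul_le_mul_of_nonneg_right _ hδ.le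
          exact_mod_cast Finset.card_le_card (Finset.filter_subset _ _)
  have hsmall : (s₀.card : ℝ) * δ < ε / 2 := by
    have h2pos : (0 : ℝ) < 2 * ((s₀.card : ℝ) + 1) := by positivity
    have hδval : δ * (2 * ((s₀.card : ℝ) + 1)) = ε := by
      rw [hδdef]; field_simp
    nlinarith
  calc ‖Fv (sOf q) (aOf q) - y‖
      ≤ ‖Fv (sOf q) (aOf q) - ∑ i ∈ sf, lp.single 2 i (y i)‖ +
        ‖(∑ i ∈ sf, lp.single 2 i (y i)) - y‖ := norm_sub_le_norm_sub_add_norm_sub _ _ _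
    _ < ε / 2 + ε / 2 := by
        apply add_lt_add_of_le_of_lt (hdiff.trans_lt hsmall).le
        rw [hfilter, ← dist_eq_norm]
        exact hpart
    _ = ε := by ring

end SalasAux

set_option maxHeartbeats 1600000 in
/-- For the bilateral forward shift with weights `w_n = 1/2` (`n ≥ 0`), `w_n = 3` (`n < 0`) and
`M` the subspace of sequences vanishing at even indices: `T^{2k}(M) ⊆ M` for all `k`,
`∏_{j=1}^{2k} w_j → 0`, `∏_{j=-1}^{-2k} (1/w_j) → 0`, and consequently `T` is `M`-hypercyclic. -/
theorem salas_type_shift_subspace_hypercyclic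
    (w : ℤ → ℝ) (hw : ∀ n : ℤ, w n = if 0 ≤ n then (1 / 2 : ℝ) else 3)
    (T : lp (fun _ : ℤ => ℂ) 2 →L[ℂ] lp (fun _ : ℤ => ℂ) 2)
    (hT : ∀ n : ℤ, T (lp.single 2 n (1 : ℂ)) = (w n : ℂ) • lp.single 2 (n + 1) (1 : ℂ))
    (M : Submodule ℂ (lp (fun _ : ℤ => ℂ) 2))
    (hM : ∀ x : lp (fun _ : ℤ => ℂ) 2, x ∈ M ↔ ∀ n : ℤ, x (2 * n) = 0) :
    (∀ k : ℕ, ∀ x ∈ M, (T ^ (2 * k)) x ∈ M) ∧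
    Tendsto (fun k : ℕ => ∏ j ∈ Finset.range (2 * k), w (1 + j)) atTop (𝓝 0) ∧
    Tendsto (fun k : ℕ => ∏ j ∈ Finset.range (2 * k), (w (-1 - j))⁻¹) atTop (𝓝 0) ∧
    ∃ x : lp (fun _ : ℤ => ℂ) 2,
      (M : Set (lp (fun _ : ℤ => ℂ) 2)) ⊆
        closure ({y | ∃ n : ℕ, (T ^ n) x = y} ∩ (M : Set (lp (fun _ : ℤ => ℂ) 2))) := by
  classical
  refine ⟨fun k => TpowmemM hw hT hM k, ?_, ?_, ?_⟩
  · -- second conjunct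
    have hfun : ∀ k : ℕ, (∏ j ∈ Finset.range (2 * k), w (1 + j)) = ((1/2:ℝ)^2) ^ k := by
      intro k
      have hterm : ∀ j ∈ Finset.range (2 * k), w (1 + (j:ℤ)) = 1/2 := by
        intro j _
        rw [hw, if_pos (by omega)]
      rw [Finset.prod_congr rfl hterm, Finset.prod_const, Finset.card_range, ← pow_mul,
        mul_comm 2 k, pow_mul]
    simp only [hfun]
    exact tendsto_pow_atTop_nhds_zero_of_lt_one (by norm_num) (by norm_num)
  · have hfun : ∀ k : ℕ, (∏ j ∈ Finset.range (2 * k), (w (-1 - j))⁻¹) = (((1:ℝ)/3)^2) ^ k := by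
      intro k
      have hterm : ∀ j ∈ Finset.range (2 * k), (w (-1 - (j:ℤ)))⁻¹ = 1/3 := by
        intro j _
        rw [hw, if_neg (by omega)]
        norm_num
      rw [Finset.prod_congr rfl hterm, Finset.prod_const, Finset.card_range, ← pow_mul,
        mul_comm 2 k, pow_mul]
    simp only [hfun]
    exact tendsto_pow_atTop_nhds_zero_of_lt_one (by norm_num) (by norm_num)
  · -- the construction of the M-hypercyclic-like vector
    obtain ⟨e, he⟩ := exists_surjective_nat (ℤ →₀ ℚ × ℚ)
    set d : ℕ → (ℤ →₀ ℚ × ℚ) := fun k => e (Nat.unpair k).1 with hd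
    set sG : ℕ → Finset ℤ := fun k => sOf (d k) with hsG
    set aG : ℕ → ℤ → ℂ := fun k => aOf (d k) with haG
    -- choose thresholds
    have hNex : ∀ k : ℕ, ∃ N : ℕ, ∀ n ≥ N,
        ‖Pv w n (sG k) (aG k)‖ ≤ (1/2:ℝ)^k * (1/2)^k ∧
        ∀ j ≤ k, ‖(T ^ n) (Fv (sG j) (aG j))‖ ≤ (1/2:ℝ)^k * (1/2)^j := by
      intro k
      have ev1 : ∀ᶠ n : ℕ in atTop, ‖Pv w n (sG k) (aG k)‖ ≤ (1/2:ℝ)^k * (1/2)^k :=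
        (tendPv hw (sG k) (aG k)).eventually_le_const (by positivity)
      have ev2 : ∀ᶠ n : ℕ in atTop, ∀ j ∈ Finset.range (k+1),
          ‖(T ^ n) (Fv (sG j) (aG j))‖ ≤ (1/2:ℝ)^k * (1/2)^j :=
        (Filter.eventually_all_finset _).mpr fun j _ =>
          (tendTF hw hT (sG j) (aG j)).eventually_le_const (by positivity)
      obtain ⟨N, hN⟩ := Filter.eventually_atTop.mp (ev1.and ev2)
      exact ⟨N, fun n hn => ⟨(hN n hn).1,
        fun j hj => (hN n hn).2 j (Finset.mem_range.mpr (by omega))⟩⟩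
    choose N hN using hNex
    -- the sequence of (even) powers
    set m : ℕ → ℕ := fun k => Nat.rec (2 * N 0) (fun k mk => mk + 2 * N (k+1) + 2) k with hm
    have hm0 : m 0 = 2 * N 0 := rfl
    have hmsucc : ∀ k, m (k+1) = m k + 2 * N (k+1) + 2 := fun k => rfl
    have hmeven : ∀ k, Even (m k) := by
      intro k
      induction k with
      | zero => exact ⟨N 0, by omega⟩
      | succ k ih =>
        obtain ⟨c, hc⟩ := ih
        exact ⟨c + N (k+1) + 1, by rw [hmsucc]; omega⟩
    have hmmono : Monotone m := monotone_nat_of_le_succ fun k => by rw [hmsucc]; omega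
    have hmN : ∀ k, N k ≤ m k := by
      intro k
      cases k with
      | zero => rw [hm0]; omega
      | succ k => rw [hmsucc]; omega
    have hgap : ∀ j k, j < k → m j + N k ≤ m k := by
      intro j k hjk
      obtain ⟨k', rfl⟩ : ∃ k', k = k' + 1 := ⟨k - 1, by omega⟩
      have h1 : m j ≤ m k' := hmmono (by omega)
      rw [hmsucc]
      omega
    set v : ℕ → E2 := fun k => Pv w (m k) (sG k) (aG k) with hv
    have hvPv : ∀ k, v k = Pv w (m k) (sG k) (aG k) := fun k => rfl
    have hvnorm : ∀ k, ‖v k‖ ≤ (1/2:ℝ)^k * (1/2)^k := fun k => (hN k (m k) (hmN k)).1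
    have hvnorm' : ∀ k, ‖v k‖ ≤ (1/2:ℝ)^k := by
      intro k
      refine (hvnorm k).trans ?_
      have h1 : (1/2:ℝ)^k ≤ 1 := pow_le_one₀ (by norm_num) (by norm_num)
      nlinarith [pow_nonneg (show (0:ℝ) ≤ 1/2 by norm_num) k]
    have hsum : Summable v := Summable.of_norm_bounded
      (summable_geometric_of_lt_one (by norm_num) (by norm_num)) hvnorm'
    set x : E2 := ∑' k, v k with hx
    have hvM : ∀ k, v k ∈ M := fun k => PvmemM hM (hmeven k) (sOf_odd (d k)) (aG k)
    have hxM : x ∈ M := by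
      refine (Mclosed hM).mem_of_tendsto hsum.hasSum (Filter.Eventually.of_forall fun s => ?_)
      exact Submodule.sum_mem M fun k _ => hvM k
    -- T^{m j} v j = Fv ...
    have hgF : ∀ j, (T ^ (m j)) (v j) = Fv (sG j) (aG j) := by
      intro j
      have h0 : m j = 0 + m j := (zero_add _).symm
      rw [hvPv j]
      calc (T ^ (m j)) (Pv w (m j) (sG j) (aG j))
          = (T ^ (m j)) (Pv w (0 + m j) (sG j) (aG j)) := by rw [← h0]
        _ = Pv w 0 (sG j) (aG j) := TPv hw hT (m j) 0 _ _
        _ = Fv (sG j) (aG j) := Pv_zero _ _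
    have hTPgen : ∀ kk jj, m kk ≤ m jj →
        (T ^ (m kk)) (v jj) = Pv w (m jj - m kk) (sG jj) (aG jj) := by
      intro kk jj hmm
      have h2 : m jj = (m jj - m kk) + m kk := by omega
      rw [hvPv jj]
      calc (T ^ (m kk)) (Pv w (m jj) (sG jj) (aG jj))
          = (T ^ (m kk)) (Pv w ((m jj - m kk) + m kk) (sG jj) (aG jj)) := by rw [← h2]
        _ = Pv w (m jj - m kk) (sG jj) (aG jj) := TPv hw hT (m kk) (m jj - m kk) _ _
    have hmapAll : ∀ nn : ℕ, (T ^ nn) x = ∑' j, (T ^ nn) (v j) := fun nn =>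
      ContinuousLinearMap.map_tsum (T ^ nn) hsum
    clear_value v x m
    refine ⟨x, ?_⟩
    intro y hy
    rw [Metric.mem_closure_iff]
    intro ε hε
    obtain ⟨q, hq⟩ := denseQ hM y hy (show (0:ℝ) < ε/2 by positivity)
    obtain ⟨a, ha⟩ := he q
    obtain ⟨K, hK⟩ := exists_pow_lt_of_lt_one (show (0:ℝ) < ε/8 by positivity)
      (show (1/2:ℝ) < 1 by norm_num)
    set k := Nat.pair a K with hk
    have hdk : d k = q := by
      simp only [hd, hk, Nat.unpair_pair]
      exact ha
    have hkK : K ≤ k := Nat.right_le_pair a K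
    clear_value k
    -- key error estimate
    have key : ‖(T ^ (m k)) x - Fv (sG k) (aG k)‖ ≤ (1/2:ℝ)^k * 2 := by
      have hmap : (T ^ (m k)) x = ∑' j, (T ^ (m k)) (v j) := hmapAll (m k)
      have hgsum : Summable (fun j => (T ^ (m k)) (v j)) :=
        ((T ^ (m k)).hasSum hsum.hasSum).summable
      have hsplit := hgsum.tsum_eq_add_tsum_ite k
      have hbound : ∀ j, ‖if j = k then (0:E2) else (T ^ (m k)) (v j)‖ ≤
          (1/2:ℝ)^k * (1/2)^j := by
        intro j
        by_cases hjk : j = k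
        · rw [if_pos hjk, norm_zero]; positivity
        · rw [if_neg hjk]
          rcases lt_or_gt_of_ne hjk with hlt | hgt
          · -- j < k
            have hmm : m j ≤ m k := hmmono hlt.le
            have e1 : (T ^ (m k)) (v j) = (T ^ (m k - m j)) ((T ^ (m j)) (v j)) := by
              rw [← ContinuousLinearMap.mul_apply, ← pow_add]
              have : m k - m j + m j = m k := by omega
              rw [this]
            rw [e1, hgF j]
            have hge : N k ≤ m k - m j := by
              have := hgap j k hlt
              omega
            exact (hN k (m k - m j) hge).2 j hlt.le
          · -- k < j
            have hmm : m k ≤ m j := hmmono hgt.le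
            have e1 : (T ^ (m k)) (v j) = Pv w (m j - m k) (sG j) (aG j) :=
              hTPgen k j hmm
            rw [e1]
            have hge : N j ≤ m j - m k := by
              have := hgap k j hgt
              omega
            refine ((hN j (m j - m k) hge).1).trans ?_
            have h3 : (1/2:ℝ)^j ≤ (1/2)^k :=
              pow_le_pow_of_le_one (by norm_num) (by norm_num) hgt.le
            nlinarith [pow_nonneg (show (0:ℝ) ≤ 1/2 by norm_num) j]
      have hhs2 : HasSum (fun j : ℕ => (1/2:ℝ)^k * (1/2)^j) ((1/2:ℝ)^k * 2) := by
        have hgeo := hasSum_geometric_of_lt_one (show (0:ℝ) ≤ 1/2 by norm_num)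
          (show (1/2:ℝ) < 1 by norm_num)
        have h2 : ((1:ℝ) - 1/2)⁻¹ = 2 := by norm_num
        rw [h2] at hgeo
        exact hgeo.mul_left _
      have hle := tsum_of_norm_bounded hhs2 hbound
      rw [hmap, hsplit, hgF k, add_sub_cancel_left]
      exact hle
    -- the approximating orbit element
    have hzM : (T ^ (m k)) x ∈ M := by
      obtain ⟨c, hc⟩ := hmeven k
      have h4 : m k = 2 * c := by omega
      rw [h4]
      exact TpowmemM hw hT hM c x hxM
    refine ⟨(T ^ (m k)) x, ⟨⟨m k, rfl⟩, hzM⟩, ?_⟩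
    have hFq : Fv (sG k) (aG k) = Fv (sOf q) (aOf q) := by
      simp only [hsG, haG, hdk]
    have hfinal : ‖(T ^ (m k)) x - y‖ < ε := by
      have hkk : (1/2:ℝ)^k ≤ (1/2)^K :=
        pow_le_pow_of_le_one (by norm_num) (by norm_num) hkK
      calc ‖(T ^ (m k)) x - y‖
          ≤ ‖(T ^ (m k)) x - Fv (sG k) (aG k)‖ + ‖Fv (sG k) (aG k) - y‖ :=
            norm_sub_le_norm_sub_add_norm_sub _ _ _
        _ ≤ (1/2:ℝ)^k * 2 + ‖Fv (sOf q) (aOf q) - y‖ := by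
            rw [← hFq]
            exact add_le_add key le_rfl
        _ < (ε/8) * 2 + ε/2 := by
            apply add_lt_add_of_lt_of_le _ hq.le
            nlinarith
        _ < ε := by linarith
    rw [dist_eq_norm, norm_sub_rev]
    exact hfinal
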